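/- The minimal face of x in a convex set C equals the union of {x} with all open segments contained in C that contain x. -/

import Mathlib

open Set

def IsFaceOf {W : Type*} [AddCommGroup W] [Module ℝ W] (C F : Set W) : Prop :=
  F ⊆ C ∧ Convex ℝ F ∧ ∀ y z : W, y ≠ z → openSegment ℝ y z ⊆ C →
    (openSegment ℝ y z ∩ F).Nonempty → openSegment ℝ y z ⊆ F

def minimalFace {W : Type*} [AddCommGroup W] [Module ℝ W] (C : Set W) (x : W) : Set W :=
  ⋂₀ {F | IsFaceOf C F ∧ x ∈ F}

section Aux

variable {V : Type*} [AddCommGroup V] [Module ℝ V]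

/-- The candidate set: `{x}` together with all open segments inside `C` through `x`. -/
def goodSet (C : Set V) (x : V) : Set V :=
  {x} ∪ {w | ∃ y z : V, y ≠ z ∧ openSegment ℝ y z ⊆ C ∧ x ∈ openSegment ℝ y z ∧
        w ∈ openSegment ℝ y z}

/-- The algebraic criterion for membership in the good set. -/
def crit (C : Set V) (x w : V) : Prop :=
  w ∈ C ∧ (∃ t : ℝ, 1 < t ∧ x + t • (w - x) ∈ C) ∧ (∃ s : ℝ, 0 < s ∧ x - s • (w - x) ∈ C)

lemma perturb_mem {y z p q : V} (hp : p ∈ openSegment ℝ y z) (hq : q ∈ openSegment ℝ y z) :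
    ∃ ε : ℝ, 0 < ε ∧ p + ε • (p - q) ∈ openSegment ℝ y z := by
  obtain ⟨a, b, ha, hb, hab, rfl⟩ := hp
  obtain ⟨a', b', ha', hb', hab', rfl⟩ := hq
  set ε : ℝ := min a b / (2 * (|a - a'| + 1)) with hε
  have habs : 0 ≤ |a - a'| := abs_nonneg _
  have hεpos : 0 < ε := by positivity
  have hmin : 0 < min a b := lt_min ha hb
  have hkey : ε * |a - a'| < min a b := by
    rw [hε, div_mul_eq_mul_div, div_lt_iff₀ (by positivity)]
    nlinarith
  have h1 : -(min a b) < ε * (a - a') := by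
    have := neg_abs_le (a - a')
    nlinarith [mul_le_mul_of_nonneg_left (neg_abs_le (a - a')) hεpos.le]
  have h2 : ε * (a - a') < min a b := by
    nlinarith [mul_le_mul_of_nonneg_left (le_abs_self (a - a')) hεpos.le]
  have hba : b - b' = -(a - a') := by linarith
  refine ⟨ε, hεpos, a + ε * (a - a'), b + ε * (b - b'), ?_, ?_, by linear_combination hab + ε * hba, ?_⟩
  · have : min a b ≤ a := min_le_left a b
    linarith
  · have : min a b ≤ b := min_le_right a b
    rw [hba]
    linarith
  · module

lemma crit_self {C : Set V} {x : V} (hx : x ∈ C) : crit C x x :=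
  ⟨hx, ⟨2, one_lt_two, by simp [sub_self, hx]⟩, ⟨1, one_pos, by simp [sub_self, hx]⟩⟩

lemma crit_of_seg {C : Set V} {x y z w : V} (hsub : openSegment ℝ y z ⊆ C)
    (hxm : x ∈ openSegment ℝ y z) (hwm : w ∈ openSegment ℝ y z) : crit C x w := by
  refine ⟨hsub hwm, ?_, ?_⟩
  · obtain ⟨ε, hε, hmem⟩ := perturb_mem hwm hxm
    refine ⟨1 + ε, by linarith, ?_⟩
    have h : x + (1 + ε) • (w - x) = w + ε • (w - x) := by module
    rw [h]
    exact hsub hmem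
  · obtain ⟨ε, hε, hmem⟩ := perturb_mem hxm hwm
    refine ⟨ε, hε, ?_⟩
    have h : x - ε • (w - x) = x + ε • (x - w) := by module
    rw [h]
    exact hsub hmem

lemma crit_of_mem_goodSet {C : Set V} {x w : V} (hx : x ∈ C) (hw : w ∈ goodSet C x) :
    crit C x w := by
  rcases hw with rfl | ⟨y, z, _, hsub, hxm, hwm⟩
  · exact crit_self hx
  · exact crit_of_seg hsub hxm hwm

lemma mem_goodSet_of_crit {C : Set V} (hC : Convex ℝ C) {x w : V} (h : crit C x w) :
    w ∈ goodSet C x := by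
  by_cases hwx : w = x
  · exact Or.inl hwx
  obtain ⟨hwC, ⟨t, ht, hf⟩, ⟨s, hs, he⟩⟩ := h
  set e : V := x - s • (w - x) with he'
  set f : V := x + t • (w - x) with hf'
  have hts : 0 < t + s := by linarith
  have hef : e ≠ f := by
    intro hcontra
    have h0 : (t + s) • (w - x) = 0 := by
      have : f - e = (t + s) • (w - x) := by rw [he', hf']; module
      rw [hcontra] at this
      simpa using this.symm
    have hwx0 : w - x ≠ 0 := sub_ne_zero_of_ne hwx
    rcases smul_eq_zero.mp h0 with h | h
    · linarith
    · exact hwx0 h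
  have hsubef : openSegment ℝ e f ⊆ C := hC.openSegment_subset he hf
  have hxmem : x ∈ openSegment ℝ e f := by
    refine ⟨t / (t + s), s / (t + s), by positivity, by positivity, ?_, ?_⟩
    · field_simp
    · rw [he', hf']
      match_scalars <;> field_simp <;> ring
  have hwmem : w ∈ openSegment ℝ e f := by
    refine ⟨(t - 1) / (t + s), (1 + s) / (t + s), div_pos (by linarith) hts, div_pos (by linarith) hts, ?_, ?_⟩
    · field_simp
      ring
    · rw [he', hf']
      match_scalars <;> field_simp <;> ring
  exact Or.inr ⟨e, f, hef, hsubef, hxmem, hwmem⟩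

lemma crit_comb {C : Set V} (hC : Convex ℝ C) {x w₁ w₂ : V} (h₁ : crit C x w₁)
    (h₂ : crit C x w₂) {l m : ℝ} (hl : 0 ≤ l) (hm : 0 ≤ m) (hlm : l + m = 1) :
    crit C x (l • w₁ + m • w₂) := by
  obtain ⟨hw₁, ⟨t₁, ht₁, hf₁⟩, ⟨s₁, hs₁, he₁⟩⟩ := h₁
  obtain ⟨hw₂, ⟨t₂, ht₂, hf₂⟩, ⟨s₂, hs₂, he₂⟩⟩ := h₂
  refine ⟨hC hw₁ hw₂ hl hm hlm, ?_, ?_⟩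
  · have hD : 0 < l * t₂ + m * t₁ := by nlinarith
    refine ⟨t₁ * t₂ / (l * t₂ + m * t₁), ?_, ?_⟩
    · rw [lt_div_iff₀ hD]
      nlinarith
    · have hθ1 : 0 ≤ l * t₂ / (l * t₂ + m * t₁) := by positivity
      have hθ2 : 0 ≤ m * t₁ / (l * t₂ + m * t₁) := by positivity
      have hθ3 : l * t₂ / (l * t₂ + m * t₁) + m * t₁ / (l * t₂ + m * t₁) = 1 := by
        rw [← add_div, div_self hD.ne']
      have hmem := hC hf₁ hf₂ hθ1 hθ2 hθ3
      have hid : (l * t₂ / (l * t₂ + m * t₁)) • (x + t₁ • (w₁ - x)) +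
          (m * t₁ / (l * t₂ + m * t₁)) • (x + t₂ • (w₂ - x)) =
          x + (t₁ * t₂ / (l * t₂ + m * t₁)) • (l • w₁ + m • w₂ - x) := by
        have hD' : l * t₂ + m * t₁ ≠ 0 := hD.ne'
        have hlm' : m = 1 - l := by linarith
        subst hlm'
        match_scalars <;> field_simp [hD'] <;> ring
      rwa [hid] at hmem
  · have hD : 0 < l * s₂ + m * s₁ := by
      rcases hl.lt_or_eq with h | h
      · have : 0 < l * s₂ := mul_pos h hs₂
        nlinarith [mul_nonneg hm hs₁.le]
      · have hm1 : m = 1 := by linarith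
        rw [← h, hm1]; simpa using hs₁
    refine ⟨s₁ * s₂ / (l * s₂ + m * s₁), by positivity, ?_⟩
    have hθ1 : 0 ≤ l * s₂ / (l * s₂ + m * s₁) := by positivity
    have hθ2 : 0 ≤ m * s₁ / (l * s₂ + m * s₁) := by positivity
    have hθ3 : l * s₂ / (l * s₂ + m * s₁) + m * s₁ / (l * s₂ + m * s₁) = 1 := by
      rw [← add_div, div_self hD.ne']
    have hmem := hC he₁ he₂ hθ1 hθ2 hθ3
    have hid : (l * s₂ / (l * s₂ + m * s₁)) • (x - s₁ • (w₁ - x)) +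
        (m * s₁ / (l * s₂ + m * s₁)) • (x - s₂ • (w₂ - x)) =
        x - (s₁ * s₂ / (l * s₂ + m * s₁)) • (l • w₁ + m • w₂ - x) := by
      have hD' : l * s₂ + m * s₁ ≠ 0 := hD.ne'
      have hlm' : m = 1 - l := by linarith
      subst hlm'
      match_scalars <;> field_simp [hD'] <;> ring
    rwa [hid] at hmem

lemma crit_of_face_seg {C : Set V} (hC : Convex ℝ C) {x y z w₀ w : V}
    (hsub : openSegment ℝ y z ⊆ C) (h₀ : w₀ ∈ openSegment ℝ y z)
    (hw : w ∈ openSegment ℝ y z) (hcrit : crit C x w₀) : crit C x w := by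
  obtain ⟨_, ⟨t₀, ht₀, hf₀⟩, ⟨s₀, hs₀, he₀⟩⟩ := hcrit
  refine ⟨hsub hw, ?_, ?_⟩
  · obtain ⟨ε, hε, hg⟩ := perturb_mem hw h₀
    have hgC : w + ε • (w - w₀) ∈ C := hsub hg
    have hD : 0 < t₀ + ε := by linarith
    refine ⟨(1 + ε) * t₀ / (t₀ + ε), ?_, ?_⟩
    · rw [lt_div_iff₀ hD]; nlinarith
    · have hθ1 : 0 ≤ ε / (t₀ + ε) := by positivity
      have hθ2 : 0 ≤ t₀ / (t₀ + ε) := by positivity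
      have hθ3 : ε / (t₀ + ε) + t₀ / (t₀ + ε) = 1 := by
        rw [← add_div, add_comm ε t₀, div_self hD.ne']
      have hmem := hC hf₀ hgC hθ1 hθ2 hθ3
      have hid : (ε / (t₀ + ε)) • (x + t₀ • (w₀ - x)) +
          (t₀ / (t₀ + ε)) • (w + ε • (w - w₀)) =
          x + ((1 + ε) * t₀ / (t₀ + ε)) • (w - x) := by
        match_scalars <;> field_simp <;> ring
      rwa [hid] at hmem
  · obtain ⟨δ, hδ, hh⟩ := perturb_mem h₀ hw
    have hhC : w₀ + δ • (w₀ - w) ∈ C := hsub hh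
    have hD : 0 < s₀ + 1 + δ := by linarith
    refine ⟨s₀ * δ / (s₀ + 1 + δ), by positivity, ?_⟩
    have hθ1 : 0 ≤ (1 + δ) / (s₀ + 1 + δ) := by positivity
    have hθ2 : 0 ≤ s₀ / (s₀ + 1 + δ) := by positivity
    have hθ3 : (1 + δ) / (s₀ + 1 + δ) + s₀ / (s₀ + 1 + δ) = 1 := by
      rw [← add_div, show 1 + δ + s₀ = s₀ + 1 + δ from by ring, div_self hD.ne']
    have hmem := hC he₀ hhC hθ1 hθ2 hθ3
    have hid : ((1 + δ) / (s₀ + 1 + δ)) • (x - s₀ • (w₀ - x)) +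
        (s₀ / (s₀ + 1 + δ)) • (w₀ + δ • (w₀ - w)) =
        x - (s₀ * δ / (s₀ + 1 + δ)) • (w - x) := by
      match_scalars <;> field_simp <;> ring
    rwa [hid] at hmem

lemma goodSet_isFaceOf {C : Set V} (hC : Convex ℝ C) {x : V} (hx : x ∈ C) :
    IsFaceOf C (goodSet C x) := by
  refine ⟨?_, ?_, ?_⟩
  · rintro w (rfl | ⟨y, z, _, hsub, _, hwm⟩)
    · exact hx
    · exact hsub hwm
  · intro w₁ h₁ w₂ h₂ l m hl hm hlm
    exact mem_goodSet_of_crit hC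
      (crit_comb hC (crit_of_mem_goodSet hx h₁) (crit_of_mem_goodSet hx h₂) hl hm hlm)
  · rintro y z hyz hsub ⟨w₀, hw₀seg, hw₀S⟩ w hw
    exact mem_goodSet_of_crit hC
      (crit_of_face_seg hC hsub hw₀seg hw (crit_of_mem_goodSet hx hw₀S))

end Aux

theorem minimalFace_eq_union_openSegments
    {V : Type*} [AddCommGroup V] [Module ℝ V]
    {C : Set V} (hC : Convex ℝ C) {x : V} (hx : x ∈ C) :
    minimalFace C x = {x} ∪
      {w | ∃ y z : V, y ≠ z ∧ openSegment ℝ y z ⊆ C ∧ x ∈ openSegment ℝ y z ∧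
        w ∈ openSegment ℝ y z} := by
  show minimalFace C x = goodSet C x
  apply Subset.antisymm
  · exact sInter_subset_of_mem ⟨goodSet_isFaceOf hC hx, Or.inl rfl⟩
  · intro w hw
    rw [minimalFace, mem_sInter]
    rintro F ⟨⟨hFC, hFconv, hFface⟩, hxF⟩
    rcases hw with rfl | ⟨y, z, hyz, hsub, hxm, hwm⟩
    · exact hxF
    · exact hFface y z hyz hsub ⟨x, hxm, hxF⟩ hwm
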